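/- Let u solve the transport equation ∂ₜu − b∂ₓu = 0 on [0,T]×[0,L] with u(t,L) = 0 and u(0,·) = u⁰ ∈ L²(0,L) extended by zero. Define μ_k(t) = ∫₀^L x^k u(t,x) dx. Then dμ₀/dt = −b u(t,0) and dμ_k/dt = −bk μ_{k−1}(t) for k ≥ 1. Consequently, if T > L/b then ‖u⁰‖²_{L²(0,L)} ≤ C ‖d^{k+1}μ_k/dt^{k+1}‖²_{L²(0,T)} for a constant C depending on b, k. -/

import Mathlib

open MeasureTheory Set intervalIntegral
open Topology Filter


/-- FTC-1: derivative of the primitive within `Icc 0 T`. -/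
lemma aux_primitive_deriv {g : ℝ → ℝ} {T : ℝ} (hT : 0 < T)
    (hg : ContinuousOn g (Icc 0 T)) {t : ℝ} (ht : t ∈ Icc 0 T) :
    HasDerivWithinAt (fun s => ∫ x in (0:ℝ)..s, g x) (g t) (Icc 0 T) t := by
  have hmeas : AEStronglyMeasurable g (volume.restrict (Icc 0 T)) :=
    hg.aestronglyMeasurable measurableSet_Icc
  have hint : IntervalIntegrable g volume 0 t := by
    apply ContinuousOn.intervalIntegrable
    apply hg.mono
    rw [uIcc_of_le ht.1]
    exact Icc_subset_Icc le_rfl ht.2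
  rcases eq_or_lt_of_le ht.1 with h0 | h0
  · subst h0
    have h1 : HasDerivWithinAt (fun s => ∫ x in (0:ℝ)..s, g x) (g 0) (Ici 0) 0 := by
      apply integral_hasDerivWithinAt_right hint
      · exact ⟨Icc 0 T, Icc_mem_nhdsGT_of_mem ⟨le_rfl, hT⟩, hmeas⟩
      · have h2 := (hg 0 ht)
        rw [ContinuousWithinAt, nhdsWithin_Icc_eq_nhdsGE hT] at h2
        exact ContinuousWithinAt.mono h2 Ioi_subset_Ici_self
    exact h1.mono Icc_subset_Ici_self
  rcases eq_or_lt_of_le ht.2 with h1 | h1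
  · subst h1
    have h1 : HasDerivWithinAt (fun s => ∫ x in (0:ℝ)..s, g x) (g t) (Iic t) t := by
      apply integral_hasDerivWithinAt_right hint
      · exact ⟨Icc 0 t, Icc_mem_nhdsLE_of_mem ⟨h0, le_rfl⟩, hmeas⟩
      · have h2 := (hg t ht)
        rw [ContinuousWithinAt, nhdsWithin_Icc_eq_nhdsLE h0] at h2
        exact h2
    exact h1.mono Icc_subset_Iic_self
  · have hmem : Icc 0 T ∈ 𝓝 t := Icc_mem_nhds h0 h1
    have h2 : HasDerivAt (fun s => ∫ x in (0:ℝ)..s, g x) (g t) t := by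
      apply integral_hasDerivAt_right hint ⟨Icc 0 T, hmem, hmeas⟩
      have h3 := hg t ht
      rwa [ContinuousWithinAt, nhdsWithin_eq_nhds.mpr hmem] at h3
    exact h2.hasDerivWithinAt

/-- Fubini for continuous functions on a rectangle, interval-integral form. -/
lemma aux_swap {a b c d : ℝ} (hab : a ≤ b) (hcd : c ≤ d) {F : ℝ → ℝ → ℝ}
    (hF : ContinuousOn (fun p : ℝ × ℝ => F p.1 p.2) (Icc a b ×ˢ Icc c d)) :
    ∫ s in a..b, ∫ x in c..d, F s x = ∫ x in c..d, ∫ s in a..b, F s x := by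
  have h1 : IntegrableOn (fun p : ℝ × ℝ => F p.1 p.2) (Icc a b ×ˢ Icc c d) :=
    hF.integrableOn_compact (isCompact_Icc.prod isCompact_Icc)
  have h2 : Integrable (Function.uncurry F)
      ((volume.restrict (Ioc a b)).prod (volume.restrict (Ioc c d))) := by
    rw [Measure.prod_restrict, ← Measure.volume_eq_prod]
    exact h1.mono_set (prod_mono Ioc_subset_Icc_self Ioc_subset_Icc_self)
  simp only [integral_of_le hab, integral_of_le hcd]
  exact integral_integral_swap h2

/-- Continuity of a parametric interval integral. -/
lemma aux_param_cont {T L : ℝ} (hL : 0 ≤ L) {F : ℝ → ℝ → ℝ}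
    (hF : ContinuousOn (fun p : ℝ × ℝ => F p.1 p.2) (Icc 0 T ×ˢ Icc 0 L)) :
    ContinuousOn (fun t => ∫ x in (0:ℝ)..L, F t x) (Icc 0 T) := by
  obtain ⟨C, hC⟩ := (isCompact_Icc.prod isCompact_Icc).exists_bound_of_continuousOn hF
  intro t ht
  have hIoc : (Set.uIoc (0:ℝ) L) = Ioc 0 L := uIoc_of_le hL
  apply continuousWithinAt_of_dominated_interval (bound := fun _ => C)
  · filter_upwards [self_mem_nhdsWithin] with s hs
    rw [hIoc]
    have hsec : ContinuousOn (fun x => F s x) (Icc 0 L) :=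
      hF.comp (continuous_const.prodMk continuous_id).continuousOn
        (fun x hx => ⟨hs, hx⟩)
    exact (hsec.aestronglyMeasurable measurableSet_Icc).mono_measure
      (Measure.restrict_mono Ioc_subset_Icc_self le_rfl)
  · filter_upwards [self_mem_nhdsWithin] with s hs
    filter_upwards with x hx
    rw [hIoc] at hx
    exact hC (s, x) ⟨hs, Ioc_subset_Icc_self hx⟩
  · exact intervalIntegrable_const
  · filter_upwards with x hx
    rw [hIoc] at hx
    have hsec : ContinuousOn (fun s => F s x) (Icc 0 T) :=
      hF.comp (continuous_id.prodMk continuous_const).continuousOn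
        (fun s hs => ⟨hs, Ioc_subset_Icc_self hx⟩)
    exact hsec t ht

/-- FTC-2 on a subinterval `[0,c] ⊆ [0,M]` with within-derivatives. -/
lemma aux_ftc2 {M c : ℝ} {f f' : ℝ → ℝ} (hc0 : 0 ≤ c) (hcM : c ≤ M)
    (hcont : ContinuousOn f (Icc 0 M))
    (hder : ∀ x ∈ Icc 0 M, HasDerivWithinAt f (f' x) (Icc 0 M) x)
    (hcont' : ContinuousOn f' (Icc 0 M)) :
    ∫ x in (0:ℝ)..c, f' x = f c - f 0 := by
  apply integral_eq_sub_of_hasDeriv_right_of_le hc0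
    (hcont.mono (Icc_subset_Icc le_rfl hcM))
  · intro x hx
    have hxM : x ∈ Icc 0 M := ⟨hx.1.le, hx.2.le.trans hcM⟩
    have hmem : Icc 0 M ∈ 𝓝[>] x :=
      Icc_mem_nhdsGT_of_mem ⟨hx.1.le, lt_of_lt_of_le hx.2 hcM⟩
    exact (hder x hxM).mono_of_mem_nhdsWithin hmem
  · apply ContinuousOn.intervalIntegrable
    apply hcont'.mono
    rw [uIcc_of_le hc0]
    exact Icc_subset_Icc le_rfl hcM

lemma sec_t {T L : ℝ} {v : ℝ → ℝ → ℝ}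
    (hv : ContinuousOn (fun p : ℝ × ℝ => v p.1 p.2) (Icc 0 T ×ˢ Icc 0 L))
    {x : ℝ} (hx : x ∈ Icc 0 L) : ContinuousOn (fun s => v s x) (Icc 0 T) :=
  hv.comp (continuous_id.prodMk continuous_const).continuousOn (fun _ hs => ⟨hs, hx⟩)

lemma sec_x {T L : ℝ} {v : ℝ → ℝ → ℝ}
    (hv : ContinuousOn (fun p : ℝ × ℝ => v p.1 p.2) (Icc 0 T ×ˢ Icc 0 L))
    {t : ℝ} (ht : t ∈ Icc 0 T) : ContinuousOn (fun x => v t x) (Icc 0 L) :=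
  hv.comp (continuous_const.prodMk continuous_id).continuousOn (fun _ hx => ⟨ht, hx⟩)

/-- Differentiation under the integral sign for moments. -/
lemma aux_key {T L : ℝ} (hT : 0 < T) (hL : 0 < L) {u ut : ℝ → ℝ → ℝ}
    (hu : ContinuousOn (fun p : ℝ × ℝ => u p.1 p.2) (Icc 0 T ×ˢ Icc 0 L))
    (hut : ContinuousOn (fun p : ℝ × ℝ => ut p.1 p.2) (Icc 0 T ×ˢ Icc 0 L))
    (hdt : ∀ t ∈ Icc 0 T, ∀ x ∈ Icc 0 L,
      HasDerivWithinAt (fun s => u s x) (ut t x) (Icc 0 T) t)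
    (j : ℕ) {t : ℝ} (ht : t ∈ Icc 0 T) :
    HasDerivWithinAt (fun s => ∫ x in (0:ℝ)..L, x^j * u s x)
      (∫ x in (0:ℝ)..L, x^j * ut t x) (Icc 0 T) t := by
  have hGc : ContinuousOn (fun p : ℝ × ℝ => p.2^j * ut p.1 p.2) (Icc 0 T ×ˢ Icc 0 L) :=
    ((continuous_snd.pow j).continuousOn).mul hut
  have hg : ContinuousOn (fun s => ∫ x in (0:ℝ)..L, x^j * ut s x) (Icc 0 T) :=
    aux_param_cont hL.le hGc
  have hprim := aux_primitive_deriv hT hg ht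
  have h0T : (0:ℝ) ∈ Icc 0 T := ⟨le_rfl, hT.le⟩
  have hrepr : ∀ r ∈ Icc 0 T, (∫ x in (0:ℝ)..L, x^j * u r x)
      = (∫ x in (0:ℝ)..L, x^j * u 0 x)
        + ∫ s in (0:ℝ)..r, (∫ x in (0:ℝ)..L, x^j * ut s x) := by
    intro r hr
    have hmono : Icc 0 r ×ˢ Icc 0 L ⊆ Icc 0 T ×ˢ Icc 0 L :=
      prod_mono (Icc_subset_Icc le_rfl hr.2) le_rfl
    have hswap := aux_swap hr.1 hL.le (F := fun s x => x^j * ut s x) (hGc.mono hmono)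
    have hinner : ∀ x ∈ Icc 0 L,
        (∫ s in (0:ℝ)..r, x^j * ut s x) = x^j * u r x - x^j * u 0 x := by
      intro x hx
      rw [intervalIntegral.integral_const_mul]
      have hftc := aux_ftc2 (M := T) (c := r) (f := fun s => u s x)
        (f' := fun s => ut s x) hr.1 hr.2 (sec_t hu hx)
        (fun s hs => hdt s hs x hx) (sec_t hut hx)
      rw [hftc]; ring
    have hint2 : IntervalIntegrable (fun x => x^j * u 0 x) volume 0 L := by
      apply ContinuousOn.intervalIntegrable
      rw [uIcc_of_le hL.le]
      exact ((continuous_pow j).continuousOn).mul (sec_x hu h0T)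
    have hint3 : IntervalIntegrable (fun x => ∫ s in (0:ℝ)..r, x^j * ut s x) volume 0 L := by
      apply ContinuousOn.intervalIntegrable
      rw [uIcc_of_le hL.le]
      have hGc' : ContinuousOn (fun p : ℝ × ℝ => p.1^j * ut p.2 p.1)
          (Icc 0 L ×ˢ Icc 0 r) := by
        apply ((continuous_fst.pow j).continuousOn).mul
        exact hut.comp (continuous_snd.prodMk continuous_fst).continuousOn
          (fun p hp => ⟨Icc_subset_Icc le_rfl hr.2 hp.2, hp.1⟩)
      exact aux_param_cont (T := L) (L := r) hr.1 hGc'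
    calc (∫ x in (0:ℝ)..L, x^j * u r x)
        = ∫ x in (0:ℝ)..L, (x^j * u 0 x + ∫ s in (0:ℝ)..r, x^j * ut s x) := by
          apply integral_congr
          intro x hx
          rw [uIcc_of_le hL.le] at hx
          show x^j * u r x = x^j * u 0 x + ∫ s in (0:ℝ)..r, x^j * ut s x
          rw [hinner x hx]; ring
      _ = (∫ x in (0:ℝ)..L, x^j * u 0 x)
            + ∫ x in (0:ℝ)..L, ∫ s in (0:ℝ)..r, x^j * ut s x :=
          integral_add hint2 hint3
      _ = (∫ x in (0:ℝ)..L, x^j * u 0 x)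
            + ∫ s in (0:ℝ)..r, ∫ x in (0:ℝ)..L, x^j * ut s x := by rw [← hswap]
  exact (hprim.const_add _).congr (fun y hy => hrepr y hy) (hrepr t ht)
section
variable {b T L : ℝ} {u ut ux : ℝ → ℝ → ℝ}

lemma aux_spatial0 (hL : 0 < L)
    (hu : ContinuousOn (fun p : ℝ × ℝ => u p.1 p.2) (Icc 0 T ×ˢ Icc 0 L))
    (hux : ContinuousOn (fun p : ℝ × ℝ => ux p.1 p.2) (Icc 0 T ×ˢ Icc 0 L))
    (hdx : ∀ t ∈ Icc 0 T, ∀ x ∈ Icc 0 L,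
      HasDerivWithinAt (fun y => u t y) (ux t x) (Icc 0 L) x)
    (hpde : ∀ t ∈ Icc 0 T, ∀ x ∈ Icc 0 L, ut t x - b * ux t x = 0)
    (hbc : ∀ t ∈ Icc 0 T, u t L = 0)
    {t : ℝ} (ht : t ∈ Icc 0 T) :
    (∫ x in (0:ℝ)..L, ut t x) = -(b * u t 0) := by
  have h1 : (∫ x in (0:ℝ)..L, ut t x) = ∫ x in (0:ℝ)..L, b * ux t x := by
    apply integral_congr
    intro x hx
    rw [uIcc_of_le hL.le] at hx
    have h := hpde t ht x hx
    show ut t x = b * ux t x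
    linarith
  have h2 : (∫ x in (0:ℝ)..L, ux t x) = u t L - u t 0 :=
    aux_ftc2 (M := L) (c := L) hL.le le_rfl (sec_x hu ht) (hdx t ht) (sec_x hux ht)
  rw [h1, intervalIntegral.integral_const_mul, h2, hbc t ht]
  ring

lemma aux_spatialj (hL : 0 < L)
    (hu : ContinuousOn (fun p : ℝ × ℝ => u p.1 p.2) (Icc 0 T ×ˢ Icc 0 L))
    (hux : ContinuousOn (fun p : ℝ × ℝ => ux p.1 p.2) (Icc 0 T ×ˢ Icc 0 L))
    (hdx : ∀ t ∈ Icc 0 T, ∀ x ∈ Icc 0 L,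
      HasDerivWithinAt (fun y => u t y) (ux t x) (Icc 0 L) x)
    (hpde : ∀ t ∈ Icc 0 T, ∀ x ∈ Icc 0 L, ut t x - b * ux t x = 0)
    (hbc : ∀ t ∈ Icc 0 T, u t L = 0)
    {j : ℕ} (hj : 1 ≤ j) {t : ℝ} (ht : t ∈ Icc 0 T) :
    (∫ x in (0:ℝ)..L, x^j * ut t x)
      = -(b * j * ∫ x in (0:ℝ)..L, x^(j-1) * u t x) := by
  have hder2 : ∀ x ∈ Icc 0 L, HasDerivWithinAt (fun y => y^j * u t y)
      ((j:ℝ) * x^(j-1) * u t x + x^j * ux t x) (Icc 0 L) x :=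
    fun x hx => (hasDerivAt_pow j x).hasDerivWithinAt.mul (hdx t ht x hx)
  have hcont : ContinuousOn (fun y => y^j * u t y) (Icc 0 L) :=
    ((continuous_pow j).continuousOn).mul (sec_x hu ht)
  have hcont' : ContinuousOn
      (fun x => (j:ℝ) * x^(j-1) * u t x + x^j * ux t x) (Icc 0 L) :=
    (((continuous_const.mul (continuous_pow (j-1))).continuousOn).mul
      (sec_x hu ht)).add (((continuous_pow j).continuousOn).mul (sec_x hux ht))
  have hftc := aux_ftc2 (M := L) (c := L) hL.le le_rfl hcont hder2 hcont'
  have hz : (0:ℝ)^j = 0 := zero_pow (by omega)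
  rw [hbc t ht, hz] at hftc
  have hintA : IntervalIntegrable (fun x => (j:ℝ) * x^(j-1) * u t x) volume 0 L := by
    apply ContinuousOn.intervalIntegrable
    rw [uIcc_of_le hL.le]
    exact ((continuous_const.mul (continuous_pow (j-1))).continuousOn).mul (sec_x hu ht)
  have hintB : IntervalIntegrable (fun x => x^j * ux t x) volume 0 L := by
    apply ContinuousOn.intervalIntegrable
    rw [uIcc_of_le hL.le]
    exact ((continuous_pow j).continuousOn).mul (sec_x hux ht)
  rw [integral_add hintA hintB] at hftc
  have hA : (∫ x in (0:ℝ)..L, (j:ℝ) * x^(j-1) * u t x)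
      = (j:ℝ) * ∫ x in (0:ℝ)..L, x^(j-1) * u t x := by
    rw [← intervalIntegral.integral_const_mul]
    apply integral_congr
    intro x _
    ring
  have hB : (∫ x in (0:ℝ)..L, x^j * ut t x) = b * ∫ x in (0:ℝ)..L, x^j * ux t x := by
    rw [← intervalIntegral.integral_const_mul]
    apply integral_congr
    intro x hx
    rw [uIcc_of_le hL.le] at hx
    have h := hpde t ht x hx
    show x^j * ut t x = b * (x^j * ux t x)
    rw [show ut t x = b * ux t x from by linarith]
    ring
  rw [hB]
  rw [hA] at hftc
  have : (∫ x in (0:ℝ)..L, x^j * ux t x)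
      = -((j:ℝ) * ∫ x in (0:ℝ)..L, x^(j-1) * u t x) := by linarith
  rw [this]; ring
end

section
variable {b T L : ℝ} {u ut ux : ℝ → ℝ → ℝ}

lemma aux_obs (hb : 0 < b) (hL : 0 < L) (hT : 0 < T) (hTL : L / b ≤ T)
    (hu : ContinuousOn (fun p : ℝ × ℝ => u p.1 p.2) (Icc 0 T ×ˢ Icc 0 L))
    (hut : ContinuousOn (fun p : ℝ × ℝ => ut p.1 p.2) (Icc 0 T ×ˢ Icc 0 L))
    (hux : ContinuousOn (fun p : ℝ × ℝ => ux p.1 p.2) (Icc 0 T ×ˢ Icc 0 L))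
    (hdt : ∀ t ∈ Icc 0 T, ∀ x ∈ Icc 0 L,
      HasDerivWithinAt (fun s => u s x) (ut t x) (Icc 0 T) t)
    (hdx : ∀ t ∈ Icc 0 T, ∀ x ∈ Icc 0 L,
      HasDerivWithinAt (fun y => u t y) (ux t x) (Icc 0 L) x)
    (hpde : ∀ t ∈ Icc 0 T, ∀ x ∈ Icc 0 L, ut t x - b * ux t x = 0) :
    (∫ x in (0:ℝ)..L, u 0 x * u 0 x)
      = b * (∫ s in (0:ℝ)..(L/b), u s 0 * u s 0)
        + (∫ y in (0:ℝ)..L, u ((L-y)/b) y * u ((L-y)/b) y)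
        - b * (∫ s in (0:ℝ)..(L/b), u s (L - b*s) * u s (L - b*s)) := by
  set t₀ : ℝ := L / b with ht₀def
  have ht₀pos : 0 < t₀ := div_pos hL hb
  have hbt₀ : b * t₀ = L := by rw [ht₀def]; field_simp
  have h0T : (0:ℝ) ∈ Icc 0 T := ⟨le_rfl, hT.le⟩
  have h0L : (0:ℝ) ∈ Icc 0 L := ⟨le_rfl, hL.le⟩
  -- the integrand and its indicator truncation
  set f : ℝ → ℝ → ℝ := fun s y => 2 * u s y * ut s y with hfdef
  set H : ℝ → ℝ → ℝ := fun s y => if b * s + y ≤ L then f s y else 0 with hHdef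
  have hfc : ContinuousOn (fun p : ℝ × ℝ => f p.1 p.2) (Icc 0 T ×ˢ Icc 0 L) :=
    ((continuous_const.continuousOn.mul hu).mul hut)
  have hsub : Icc (0:ℝ) t₀ ×ˢ Icc (0:ℝ) L ⊆ Icc 0 T ×ˢ Icc 0 L :=
    prod_mono (Icc_subset_Icc le_rfl hTL) le_rfl
  have hfInt : Integrable (fun p : ℝ × ℝ => f p.1 p.2)
      ((volume.restrict (Ioc 0 t₀)).prod (volume.restrict (Ioc 0 L))) := by
    rw [Measure.prod_restrict, ← Measure.volume_eq_prod]
    exact ((hfc.mono hsub).integrableOn_compact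
      (isCompact_Icc.prod isCompact_Icc)).mono_set
      (prod_mono Ioc_subset_Icc_self Ioc_subset_Icc_self)
  have hS : MeasurableSet {p : ℝ × ℝ | b * p.1 + p.2 ≤ L} :=
    (isClosed_le (by fun_prop) continuous_const).measurableSet
  have hHint : Integrable (Function.uncurry H)
      ((volume.restrict (Ioc 0 t₀)).prod (volume.restrict (Ioc 0 L))) := by
    have hHeq : (Function.uncurry H)
        = Set.indicator {p : ℝ × ℝ | b * p.1 + p.2 ≤ L}
            (fun p : ℝ × ℝ => f p.1 p.2) := by
      funext p
      simp only [Function.uncurry, Set.indicator_apply, mem_setOf_eq, hHdef]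
    rw [hHeq]
    exact hfInt.indicator hS
  have hswap := integral_integral_swap hHint
  -- evaluate the inner integral on the left
  have hinnerL : ∀ s ∈ Ioc (0:ℝ) t₀,
      (∫ y in Ioc (0:ℝ) L, H s y)
        = b * (u s (L - b*s) * u s (L - b*s)) - b * (u s 0 * u s 0) := by
    intro s hs
    have hsT : s ∈ Icc 0 T := ⟨hs.1.le, hs.2.trans hTL⟩
    set c : ℝ := L - b * s with hcdef
    have hc0 : 0 ≤ c := by
      have : b * s ≤ b * t₀ := by nlinarith [hs.2, hb.le]
      simp only [hcdef]; linarith [hbt₀]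
    have hcL : c ≤ L := by
      have : 0 < b * s := mul_pos hb hs.1
      simp only [hcdef]; linarith
    have hind : ∀ y, H s y = (Iic c).indicator (fun y => f s y) y := by
      intro y
      simp only [hHdef, Set.indicator_apply, mem_Iic]
      exact if_congr (by constructor <;> intro h <;> simp only [hcdef] at * <;> linarith)
        rfl rfl
    calc (∫ y in Ioc (0:ℝ) L, H s y)
        = ∫ y in Ioc (0:ℝ) L, (Iic c).indicator (fun y => f s y) y :=
          integral_congr_ae (Eventually.of_forall fun y => hind y)
      _ = ∫ y in Ioc (0:ℝ) c, f s y := by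
          rw [MeasureTheory.integral_indicator measurableSet_Iic, Measure.restrict_restrict measurableSet_Iic,
            inter_comm, Ioc_inter_Iic, min_eq_right hcL]
      _ = ∫ y in (0:ℝ)..c, f s y := (integral_of_le hc0).symm
      _ = ∫ y in (0:ℝ)..c, b * (ux s y * u s y + u s y * ux s y) := by
          apply integral_congr
          intro y hy
          rw [uIcc_of_le hc0] at hy
          have hyL : y ∈ Icc 0 L := ⟨hy.1, hy.2.trans hcL⟩
          have hp := hpde s hsT y hyL
          show f s y = b * (ux s y * u s y + u s y * ux s y)
          simp only [hfdef]
          rw [show ut s y = b * ux s y from by linarith]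
          ring
      _ = b * ∫ y in (0:ℝ)..c, (ux s y * u s y + u s y * ux s y) := integral_const_mul _ _
      _ = b * (u s c * u s c - u s 0 * u s 0) := by
          rw [aux_ftc2 (M := L) (c := c) hc0 hcL ((sec_x hu hsT).mul (sec_x hu hsT))
            (fun y hy => (hdx s hsT y hy).mul (hdx s hsT y hy))
            (((sec_x hux hsT).mul (sec_x hu hsT)).add ((sec_x hu hsT).mul (sec_x hux hsT)))]
          rfl
      _ = b * (u s (L - b*s) * u s (L - b*s)) - b * (u s 0 * u s 0) := by
          simp only [hcdef]; ring
  -- evaluate the inner integral on the right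
  have hinnerR : ∀ y ∈ Ioc (0:ℝ) L,
      (∫ s in Ioc (0:ℝ) t₀, H s y)
        = u ((L-y)/b) y * u ((L-y)/b) y - u 0 y * u 0 y := by
    intro y hy
    have hyL : y ∈ Icc 0 L := ⟨hy.1.le, hy.2⟩
    set c : ℝ := (L - y) / b with hcdef
    have hc0 : 0 ≤ c := div_nonneg (by linarith [hy.2]) hb.le
    have hct₀ : c ≤ t₀ := by
      rw [hcdef, ht₀def]
      gcongr
      · linarith [hy.1]
    have hcT : c ≤ T := hct₀.trans hTL
    have hind : ∀ s, H s y = (Iic c).indicator (fun s => f s y) s := by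
      intro s
      simp only [hHdef, Set.indicator_apply, mem_Iic]
      refine if_congr ?_ rfl rfl
      constructor <;> intro h
      · rw [hcdef, le_div_iff₀ hb]; linarith
      · rw [hcdef, le_div_iff₀ hb] at h; linarith
    calc (∫ s in Ioc (0:ℝ) t₀, H s y)
        = ∫ s in Ioc (0:ℝ) t₀, (Iic c).indicator (fun s => f s y) s :=
          integral_congr_ae (Eventually.of_forall fun s => hind s)
      _ = ∫ s in Ioc (0:ℝ) c, f s y := by
          rw [MeasureTheory.integral_indicator measurableSet_Iic, Measure.restrict_restrict measurableSet_Iic,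
            inter_comm, Ioc_inter_Iic, min_eq_right hct₀]
      _ = ∫ s in (0:ℝ)..c, f s y := (integral_of_le hc0).symm
      _ = ∫ s in (0:ℝ)..c, (ut s y * u s y + u s y * ut s y) := by
          apply integral_congr
          intro s _
          show f s y = ut s y * u s y + u s y * ut s y
          simp only [hfdef]; ring
      _ = u c y * u c y - u 0 y * u 0 y := by
          rw [aux_ftc2 (M := T) (c := c) hc0 hcT ((sec_t hu hyL).mul (sec_t hu hyL))
            (fun s hs => (hdt s hs y hyL).mul (hdt s hs y hyL))
            (((sec_t hut hyL).mul (sec_t hu hyL)).add ((sec_t hu hyL).mul (sec_t hut hyL)))]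
          rfl
      _ = u ((L-y)/b) y * u ((L-y)/b) y - u 0 y * u 0 y := by rw [hcdef]
  -- rewrite both sides of hswap
  have hL1 : (∫ s in Ioc (0:ℝ) t₀, ∫ y in Ioc (0:ℝ) L, H s y)
      = ∫ s in (0:ℝ)..t₀, (b * (u s (L - b*s) * u s (L - b*s)) - b * (u s 0 * u s 0)) := by
    rw [integral_of_le ht₀pos.le]
    exact setIntegral_congr_fun measurableSet_Ioc (fun s hs => hinnerL s hs)
  have hR1 : (∫ y in Ioc (0:ℝ) L, ∫ s in Ioc (0:ℝ) t₀, H s y)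
      = ∫ y in (0:ℝ)..L, (u ((L-y)/b) y * u ((L-y)/b) y - u 0 y * u 0 y) := by
    rw [integral_of_le hL.le]
    exact setIntegral_congr_fun measurableSet_Ioc (fun y hy => hinnerR y hy)
  rw [hL1, hR1] at hswap
  -- split the integrals
  have hAc : ContinuousOn (fun s => u s (L - b*s) * u s (L - b*s)) (Icc 0 t₀) := by
    have hmap : ∀ s ∈ Icc (0:ℝ) t₀, (s, L - b*s) ∈ Icc 0 T ×ˢ Icc 0 L := by
      intro s hs
      refine ⟨⟨hs.1, hs.2.trans hTL⟩, ⟨?_, ?_⟩⟩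
      · show (0:ℝ) ≤ L - b*s
        nlinarith [hs.2, hb.le, hbt₀]
      · show L - b*s ≤ L
        nlinarith [hs.1, hb.le]
    have h1 : ContinuousOn (fun s => u s (L - b*s)) (Icc 0 t₀) :=
      hu.comp (continuous_id.prodMk (continuous_const.sub
        (continuous_const.mul continuous_id))).continuousOn hmap
    exact h1.mul h1
  have hZc : ContinuousOn (fun s => u s 0 * u s 0) (Icc 0 t₀) :=
    ((sec_t hu h0L).mono (Icc_subset_Icc le_rfl hTL)).mul
      ((sec_t hu h0L).mono (Icc_subset_Icc le_rfl hTL))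
  have hBc : ContinuousOn (fun y => u ((L-y)/b) y * u ((L-y)/b) y) (Icc 0 L) := by
    have hmap : ∀ y ∈ Icc (0:ℝ) L, ((L-y)/b, y) ∈ Icc 0 T ×ˢ Icc 0 L := by
      intro y hy
      refine ⟨⟨div_nonneg (by linarith [hy.2]) hb.le, ?_⟩, hy⟩
      have : (L-y)/b ≤ L/b := by
        gcongr
        · linarith [hy.1]
      linarith [hTL]
    have h1 : ContinuousOn (fun y => u ((L-y)/b) y) (Icc 0 L) :=
      hu.comp (((continuous_const.sub continuous_id).div_const b).prodMk
        continuous_id).continuousOn hmap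
    exact h1.mul h1
  have hWc : ContinuousOn (fun y => u 0 y * u 0 y) (Icc 0 L) :=
    (sec_x hu h0T).mul (sec_x hu h0T)
  have hint : ∀ {g : ℝ → ℝ} {M : ℝ}, 0 < M → ContinuousOn g (Icc 0 M) →
      IntervalIntegrable g volume 0 M := by
    intro g M hM hg
    apply ContinuousOn.intervalIntegrable
    rw [uIcc_of_le hM.le]
    exact hg
  rw [integral_sub ((hint ht₀pos hAc).const_mul b) ((hint ht₀pos hZc).const_mul b),
    integral_sub (hint hL hBc) (hint hL hWc),
    intervalIntegral.integral_const_mul, intervalIntegral.integral_const_mul] at hswap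
  linarith [hswap]

end
section
variable {b T L : ℝ} {u ut ux : ℝ → ℝ → ℝ}

lemma aux_subst (hb : 0 < b) (hL : 0 < L) (hTL : L / b ≤ T)
    (hu : ContinuousOn (fun p : ℝ × ℝ => u p.1 p.2) (Icc 0 T ×ˢ Icc 0 L)) :
    (∫ y in (0:ℝ)..L, u ((L-y)/b) y * u ((L-y)/b) y)
      = b * ∫ s in (0:ℝ)..(L/b), u s (L - b*s) * u s (L - b*s) := by
  set t₀ : ℝ := L / b with ht₀def
  have ht₀pos : 0 < t₀ := div_pos hL hb
  have hbt₀ : b * t₀ = L := by rw [ht₀def]; field_simp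
  set g : ℝ → ℝ := fun y => u ((L-y)/b) y * u ((L-y)/b) y with hgdef
  set φ : ℝ → ℝ := fun s => L - b * s with hφdef
  have hBc : ContinuousOn g (Icc 0 L) := by
    have hmap : ∀ y ∈ Icc (0:ℝ) L, ((L-y)/b, y) ∈ Icc 0 T ×ˢ Icc 0 L := by
      intro y hy
      refine ⟨⟨div_nonneg (by linarith [hy.2]) hb.le, ?_⟩, hy⟩
      have h2 : (L-y)/b ≤ L/b := by
        gcongr
        · linarith [hy.1]
      linarith [hTL]
    have h1 : ContinuousOn (fun y => u ((L-y)/b) y) (Icc 0 L) :=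
      hu.comp (((continuous_const.sub continuous_id).div_const b).prodMk
        continuous_id).continuousOn hmap
    exact h1.mul h1
  have himg : φ '' (uIcc 0 t₀) ⊆ Icc 0 L := by
    rw [image_subset_iff]
    intro s hs
    rw [uIcc_of_le ht₀pos.le] at hs
    refine ⟨?_, ?_⟩
    · show (0:ℝ) ≤ L - b * s
      nlinarith [hs.2, hb.le]
    · show L - b * s ≤ L
      nlinarith [hs.1, hb.le]
  have hcv := integral_comp_mul_deriv'' (a := 0) (b := t₀) (f := φ)
    (f' := fun _ => -b) (g := g)
    ((continuous_const.sub (continuous_const.mul continuous_id)).continuousOn)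
    (fun x _ => (((hasDerivAt_id x).const_mul b).const_sub L).hasDerivWithinAt.congr_deriv
      (by simp))
    continuous_const.continuousOn
    (hBc.mono himg)
  have hφ0 : φ 0 = L := by simp [hφdef]
  have hφt₀ : φ t₀ = 0 := by simp [hφdef]; linarith [hbt₀]
  rw [hφ0, hφt₀] at hcv
  have hLHS : (∫ x in (0:ℝ)..t₀, (g ∘ φ) x * (-b))
      = -b * ∫ s in (0:ℝ)..t₀, u s (L - b*s) * u s (L - b*s) := by
    rw [← intervalIntegral.integral_const_mul]
    apply integral_congr
    intro s _
    show g (φ s) * (-b) = -b * (u s (L - b*s) * u s (L - b*s))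
    have harg : (L - φ s)/b = s := by rw [hφdef]; field_simp; ring
    rw [hgdef]
    simp only [harg]
    ring
  rw [hLHS, integral_symm 0 L] at hcv
  linarith [hcv]
end


/-- Moments of the transport equation: if `u` solves `∂ₜu - b∂ₓu = 0` on `[0,T]×[0,L]`
with `u(t,L) = 0` and `u(0,·) = u⁰` (extended by zero), and
`μ_k(t) = ∫₀^L x^k u(t,x) dx`, then `μ₀' = -b u(t,0)`, `μ_k' = -bk μ_{k-1}` for `k ≥ 1`,
and if `T > L/b` then `‖u⁰‖²_{L²(0,L)} ≤ C ‖d^{k+1}μ_k/dt^{k+1}‖²_{L²(0,T)}` with `C`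
depending only on `b` and `k`. -/
theorem stmt18 (b : ℝ) (hb : 0 < b) (k : ℕ) :
    ∃ C > 0, ∀ (L T : ℝ), 0 < L → 0 < T →
    ∀ (u0 : ℝ → ℝ) (u ut ux : ℝ → ℝ → ℝ),
      (∀ x, x ∉ Set.Icc 0 L → u0 x = 0) →
      IntegrableOn (fun x => (u0 x)^2) (Set.Ioc 0 L) →
      ContinuousOn (fun p : ℝ × ℝ => u p.1 p.2) (Set.Icc 0 T ×ˢ Set.Icc 0 L) →
      ContinuousOn (fun p : ℝ × ℝ => ut p.1 p.2) (Set.Icc 0 T ×ˢ Set.Icc 0 L) →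
      ContinuousOn (fun p : ℝ × ℝ => ux p.1 p.2) (Set.Icc 0 T ×ˢ Set.Icc 0 L) →
      (∀ t ∈ Set.Icc 0 T, ∀ x ∈ Set.Icc 0 L,
        HasDerivWithinAt (fun s => u s x) (ut t x) (Set.Icc 0 T) t) →
      (∀ t ∈ Set.Icc 0 T, ∀ x ∈ Set.Icc 0 L,
        HasDerivWithinAt (fun y => u t y) (ux t x) (Set.Icc 0 L) x) →
      (∀ t ∈ Set.Icc 0 T, ∀ x ∈ Set.Icc 0 L, ut t x - b * ux t x = 0) →
      (∀ t ∈ Set.Icc 0 T, u t L = 0) →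
      (∀ x ∈ Set.Icc 0 L, u 0 x = u0 x) →
      ((∀ t ∈ Set.Icc 0 T,
          HasDerivWithinAt (fun s => ∫ x in (0:ℝ)..L, u s x)
            (-(b * u t 0)) (Set.Icc 0 T) t) ∧
        (∀ j : ℕ, 1 ≤ j → ∀ t ∈ Set.Icc 0 T,
          HasDerivWithinAt (fun s => ∫ x in (0:ℝ)..L, x^j * u s x)
            (-(b * j * ∫ x in (0:ℝ)..L, x^(j-1) * u t x)) (Set.Icc 0 T) t) ∧
        (T > L / b →
          (∫ x in (0:ℝ)..L, (u0 x)^2)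
            ≤ C * ∫ t in (0:ℝ)..T,
                (iteratedDerivWithin (k+1)
                  (fun s => ∫ x in (0:ℝ)..L, x^k * u s x) (Set.Icc 0 T) t)^2)) := by
  refine ⟨b / (b^(k+1) * (k.factorial : ℝ))^2, by positivity, ?_⟩
  intro L T hL hT u0 u ut ux hsupp hint0 hu hut hux hdt hdx hpde hbc hic
  have h0L : (0:ℝ) ∈ Icc 0 L := ⟨le_rfl, hL.le⟩
  have part1 : ∀ t ∈ Icc 0 T,
      HasDerivWithinAt (fun s => ∫ x in (0:ℝ)..L, u s x) (-(b * u t 0)) (Icc 0 T) t := by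
    intro t ht
    have h := aux_key hT hL hu hut hdt 0 ht
    simp only [pow_zero, one_mul] at h
    rwa [aux_spatial0 hL hu hux hdx hpde hbc ht] at h
  have part2 : ∀ j : ℕ, 1 ≤ j → ∀ t ∈ Icc 0 T,
      HasDerivWithinAt (fun s => ∫ x in (0:ℝ)..L, x^j * u s x)
        (-(b * j * ∫ x in (0:ℝ)..L, x^(j-1) * u t x)) (Icc 0 T) t := by
    intro j hj t ht
    have h := aux_key hT hL hu hut hdt j ht
    rwa [aux_spatialj hL hu hux hdx hpde hbc hj ht] at h
  refine ⟨part1, part2, ?_⟩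
  intro hTL
  have hUD : UniqueDiffOn ℝ (Icc (0:ℝ) T) := uniqueDiffOn_Icc hT
  -- iterated derivative formula
  have hiter : ∀ j : ℕ, j ≤ k → ∀ t ∈ Icc 0 T,
      iteratedDerivWithin j (fun s => ∫ x in (0:ℝ)..L, x^k * u s x) (Icc 0 T) t
        = ((-b)^j * (k.descFactorial j : ℝ))
            * ∫ x in (0:ℝ)..L, x^(k-j) * u t x := by
    intro j
    induction j with
    | zero =>
      intro _ t ht
      rw [iteratedDerivWithin_zero]
      simp
    | succ j ih =>
      intro hj t ht
      have hj' : j ≤ k := by omega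
      rw [iteratedDerivWithin_succ,
        derivWithin_congr (fun r hr => ih hj' r hr) (ih hj' t ht)]
      have hd : HasDerivWithinAt (fun r => ∫ x in (0:ℝ)..L, x^(k-j) * u r x)
          (-(b * ((k-j : ℕ):ℝ) * ∫ x in (0:ℝ)..L, x^((k-j)-1) * u t x)) (Icc 0 T) t :=
        part2 (k - j) (by omega) t ht
      rw [(hd.const_mul ((-b)^j * (k.descFactorial j : ℝ))).derivWithin (hUD t ht)]
      have he : (k - j) - 1 = k - (j+1) := by omega
      rw [he, Nat.descFactorial_succ]
      push_cast
      ring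
  have hit : ∀ t ∈ Icc 0 T,
      iteratedDerivWithin (k+1) (fun s => ∫ x in (0:ℝ)..L, x^k * u s x) (Icc 0 T) t
        = ((-b)^k * (k.factorial : ℝ)) * (-(b * u t 0)) := by
    intro t ht
    rw [iteratedDerivWithin_succ,
      derivWithin_congr (fun r hr => hiter k le_rfl r hr) (hiter k le_rfl t ht)]
    have h0 : HasDerivWithinAt (fun r => ∫ x in (0:ℝ)..L, x^(k-k) * u r x)
        (-(b * u t 0)) (Icc 0 T) t := by
      have h := part1 t ht
      apply h.congr
      · intro r _
        apply integral_congr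
        intro x _
        simp [Nat.sub_self]
      · apply integral_congr
        intro x _
        simp [Nat.sub_self]
    rw [(h0.const_mul ((-b)^k * (k.descFactorial k : ℝ))).derivWithin (hUD t ht),
      Nat.descFactorial_self]
  -- square of the top derivative
  have hone : ((-1:ℝ)^k)^2 = 1 := by
    rw [← pow_mul, mul_comm k 2, pow_mul, neg_one_sq, one_pow]
  have hsq : ∀ t ∈ Icc 0 T,
      (iteratedDerivWithin (k+1) (fun s => ∫ x in (0:ℝ)..L, x^k * u s x) (Icc 0 T) t)^2
        = (b^(k+1) * (k.factorial : ℝ))^2 * (u t 0 * u t 0) := by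
    intro t ht
    rw [hit t ht, neg_pow]
    calc ((-1:ℝ)^k * b^k * (k.factorial : ℝ) * (-(b * u t 0)))^2
        = ((-1:ℝ)^k)^2 * (b^k * (k.factorial : ℝ) * (b * u t 0))^2 := by ring
      _ = (b^(k+1) * (k.factorial : ℝ))^2 * (u t 0 * u t 0) := by rw [hone]; ring
  have hZc : ContinuousOn (fun t => u t 0 * u t 0) (Icc 0 T) :=
    (sec_t hu h0L).mul (sec_t hu h0L)
  have hsumint : (∫ t in (0:ℝ)..T,
      (iteratedDerivWithin (k+1) (fun s => ∫ x in (0:ℝ)..L, x^k * u s x) (Icc 0 T) t)^2)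
        = (b^(k+1) * (k.factorial : ℝ))^2 * ∫ t in (0:ℝ)..T, u t 0 * u t 0 := by
    rw [← intervalIntegral.integral_const_mul]
    apply integral_congr
    intro t ht
    rw [uIcc_of_le hT.le] at ht
    exact hsq t ht
  have ht₀T : L / b ≤ T := hTL.le
  have hmono : (∫ t in (0:ℝ)..(L/b), u t 0 * u t 0) ≤ ∫ t in (0:ℝ)..T, u t 0 * u t 0 := by
    apply integral_mono_interval le_rfl (div_pos hL hb).le ht₀T
    · filter_upwards with t
      exact mul_self_nonneg _
    · apply ContinuousOn.intervalIntegrable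
      rw [uIcc_of_le hT.le]
      exact hZc
  have hkey : (∫ x in (0:ℝ)..L, u 0 x * u 0 x)
      = b * ∫ s in (0:ℝ)..(L/b), u s 0 * u s 0 := by
    have h1 := aux_obs hb hL hT ht₀T hu hut hux hdt hdx hpde
    have h2 := aux_subst hb hL ht₀T hu
    linarith
  have hu0 : (∫ x in (0:ℝ)..L, (u0 x)^2) = ∫ x in (0:ℝ)..L, u 0 x * u 0 x := by
    apply integral_congr
    intro x hx
    rw [uIcc_of_le hL.le] at hx
    show (u0 x)^2 = u 0 x * u 0 x
    rw [hic x hx]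
    ring
  have hD : (0:ℝ) < (b^(k+1) * (k.factorial : ℝ))^2 := by positivity
  rw [hu0, hkey, hsumint]
  have hfin : b / (b^(k+1) * (k.factorial : ℝ))^2
      * ((b^(k+1) * (k.factorial : ℝ))^2 * ∫ t in (0:ℝ)..T, u t 0 * u t 0)
      = b * ∫ t in (0:ℝ)..T, u t 0 * u t 0 := by
    field_simp
  rw [hfin]
  exact mul_le_mul_of_nonneg_left hmono hb.le
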